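/- The formal Taylor series y(x) = ε(x−a) + b(x−a)² + (2aε/3)(x−a)³ with ε = ±2α satisfies the Painlevé XXXIV equation y'' = (y')²/(2y) + 4y² + 2xy − (2α)²/(2y) up to leading orders; precisely, 2y·y'' − (y')² − 8y³ − 4xy² + (2α)² = O((x−a)³) as x → a, for any parameter b. -/

import Mathlib

open Filter Asymptotics Topology

/-- The truncated Taylor expansion
`y(x) = ε(x−a) + b(x−a)² + (2aε/3)(x−a)³` with `ε = ±2α`
solves the Painlevé XXXIV equation (cleared of denominators) to leading orders:
`2y·y'' − (y')² − 8y³ − 4xy² + (2α)²` is `O((x−a)³)` as `x → a`. -/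
theorem PXXXIV_taylor_formal (a b α ε : ℂ) (hε : ε = 2*α ∨ ε = -(2*α))
    (y : ℂ → ℂ)
    (hy : ∀ x, y x = ε * (x - a) + b * (x - a)^2 + 2*a*ε/3 * (x - a)^3) :
    (fun x => 2 * y x * deriv (deriv y) x - (deriv y x)^2 - 8 * (y x)^3
        - 4 * x * (y x)^2 + (2*α)^2)
      =O[𝓝 a] fun x => (x - a)^3 := by
  have hε2 : ε ^ 2 = 4 * α ^ 2 := by rcases hε with h | h <;> subst h <;> ring
  have hyf : y = fun x => ε * (x - a) + b * (x - a)^2 + 2*a*ε/3 * (x - a)^3 :=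
    funext hy
  have H1 : ∀ x : ℂ, HasDerivAt y (ε + 2*b*(x-a) + 2*a*ε*(x-a)^2) x := by
    intro x
    have h1 : HasDerivAt (fun x : ℂ => x - a) 1 x := (hasDerivAt_id x).sub_const a
    have h2 := (h1.pow 2).const_mul b
    have h3 := (h1.pow 3).const_mul (2*a*ε/3)
    have h0 := h1.const_mul ε
    have := (h0.add h2).add h3
    simp only [Pi.add_def, Pi.pow_apply] at this
    rw [← hyf] at this
    refine this.congr_deriv ?_
    push_cast
    ring
  have hd1 : deriv y = fun x => ε + 2*b*(x-a) + 2*a*ε*(x-a)^2 :=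
    funext fun x => (H1 x).deriv
  have H2 : ∀ x : ℂ, HasDerivAt (deriv y) (2*b + 4*a*ε*(x-a)) x := by
    intro x
    have h1 : HasDerivAt (fun x : ℂ => x - a) 1 x := (hasDerivAt_id x).sub_const a
    have h2 := (h1.const_mul (2*b))
    have h3 := (h1.pow 2).const_mul (2*a*ε)
    have := ((hasDerivAt_const x ε).add h2).add h3
    simp only [Pi.add_def, Pi.pow_apply] at this
    rw [← hd1] at this
    refine this.congr_deriv ?_
    push_cast
    ring
  have hd2 : deriv (deriv y) = fun x => 2*b + 4*a*ε*(x-a) :=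
    funext fun x => (H2 x).deriv
  set g : ℂ → ℂ := fun x =>
    -4*ε^2 - 8*ε^3 - (16/3)*a*b*ε
    + (x-a) * (-8*b*ε - 24*b*ε^2 - 4*a*b^2 - 4*a^2*ε^2)
    + (x-a)^2 * (-4*b^2 - 24*b^2*ε - (16/3)*a*ε^2 - 16*a*ε^3 - (16/3)*a^2*b*ε)
    + (x-a)^3 * (-8*b^3 - (16/3)*a*b*ε - 32*a*b*ε^2 - (16/9)*a^3*ε^2)
    + (x-a)^4 * (-16*a*b^2*ε - (16/9)*a^2*ε^2 - (32/3)*a^2*ε^3)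
    + (x-a)^5 * (-(32/3)*a^2*b*ε^2)
    + (x-a)^6 * (-(64/27)*a^3*ε^3) with hg
  have key : (fun x => 2 * y x * deriv (deriv y) x - (deriv y x)^2 - 8 * (y x)^3
        - 4 * x * (y x)^2 + (2*α)^2) = fun x => (x - a)^3 * g x := by
    funext x
    rw [hy x, hd2, hd1, hg]
    simp only
    linear_combination (-1 : ℂ) * hε2
  rw [key]
  have hgc : Continuous g := by
    rw [hg]; fun_prop
  have hbig : g =O[𝓝 a] (fun _ => (1:ℂ)) :=
    (hgc.continuousAt (x := a)).isBigO_one ℂ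
  calc (fun x => (x - a)^3 * g x)
      =O[𝓝 a] fun x => (x - a)^3 * 1 := (isBigO_refl _ _).mul hbig
    _ = fun x => (x - a)^3 := by funext x; ring
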